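/- Let (X,d) be a compact metric space and f : X → X a homeomorphism. If (X,f) is not minimal and has the gluing orbit property, then f has a non-recurrent point, i.e., there exist z ∈ X and ε₀ > 0 such that d(f^n(z), z) ≥ ε₀ for every nonzero integer n. -/

import Mathlib

open Filter Set Metric

namespace Paper

variable {X : Type*}

/-- Integer iteration of a homeomorphism: `f^n` for `n : ℤ`. -/
def zIter [TopologicalSpace X] (f : X ≃ₜ X) (n : ℤ) (x : X) : X :=
  if 0 ≤ n then (⇑f)^[n.toNat] x else (⇑f.symm)^[(-n).toNat] x

/-- `(X,f)` is minimal: every (two-sided) orbit is dense. -/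
def Minimal [TopologicalSpace X] (f : X ≃ₜ X) : Prop :=
  ∀ x : X, Dense (Set.range fun n : ℤ => zIter f n x)

/-- Topological transitivity. -/
def TopTransitive [TopologicalSpace X] (f : X ≃ₜ X) : Prop :=
  ∀ U V : Set X, IsOpen U → IsOpen V → U.Nonempty → V.Nonempty →
    ∃ n : ℤ, (U ∩ (zIter f n) ⁻¹' V).Nonempty

/-- Equicontinuity of the family of forward iterates. -/
def EquicontinuousSystem [MetricSpace X] (f : X → X) : Prop :=
  ∀ ε : ℝ, 0 < ε → ∃ δ : ℝ, 0 < δ ∧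
    ∀ x y : X, dist x y < δ → ∀ n : ℕ, dist (f^[n] x) (f^[n] y) < ε

/-- The transition times `s_j` (0-indexed: `s 0 = 0`,
`s (j+1) = s j + m_j + t_j - 1`) for an orbit sequence `C` (with lengths `m_j = (C j).2`)
and a gap `g`. -/
def sTimes (C : ℕ → X × ℕ) (g : ℕ → ℕ) : ℕ → ℕ
  | 0 => 0
  | j + 1 => sTimes C g j + (C j).2 + g j - 1

/-- `(C, g)` (an orbit sequence of rank `k` together with a gap) is `ε`-shadowed by `z`. -/
def Shadows [MetricSpace X] (f : X → X) (k : ℕ) (C : ℕ → X × ℕ) (g : ℕ → ℕ)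
    (ε : ℝ) (z : X) : Prop :=
  ∀ j < k, ∀ l < (C j).2, dist (f^[sTimes C g j + l] z) (f^[l] (C j).1) < ε

/-- The gluing orbit property. -/
def GluingOrbit [MetricSpace X] (f : X → X) : Prop :=
  ∀ ε : ℝ, 0 < ε → ∃ M : ℕ, 0 < M ∧
    ∀ k : ℕ, 0 < k → ∀ C : ℕ → X × ℕ, (∀ j < k, 0 < (C j).2) →
      ∃ g : ℕ → ℕ, (∀ j < k - 1, 0 < g j ∧ g j ≤ M) ∧
        ∃ z : X, Shadows f k C g ε z

/-- The specification property, at scale `ε` with constant `M`. -/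
def SpecWith [MetricSpace X] (f : X → X) (ε : ℝ) (M : ℕ) : Prop :=
  ∀ k : ℕ, 0 < k → ∀ C : ℕ → X × ℕ, (∀ j < k, 0 < (C j).2) →
    ∀ g : ℕ → ℕ, (∀ j < k - 1, M ≤ g j) →
      ∃ z : X, Shadows f k C g ε z

/-- The specification property. -/
def Specification [MetricSpace X] (f : X → X) : Prop :=
  ∀ ε : ℝ, 0 < ε → ∃ M : ℕ, 0 < M ∧ SpecWith f ε M

/-- The periodic gluing orbit property. -/
def PerGluingOrbit [MetricSpace X] (f : X → X) : Prop :=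
  ∀ ε : ℝ, 0 < ε → ∃ M : ℕ, 0 < M ∧
    ∀ k : ℕ, 0 < k → ∀ C : ℕ → X × ℕ, (∀ j < k, 0 < (C j).2) →
      ∃ t : ℕ, 0 < t ∧ t ≤ M ∧
        ∃ g : ℕ → ℕ, (∀ j < k - 1, 0 < g j ∧ g j ≤ M) ∧
          ∃ z : X, Shadows f k C g ε z ∧
            f^[sTimes C g (k - 1) + (C (k - 1)).2 + t] z = z

/-- `E` is an `(n,ε)`-separated set. -/
def IsSepSet [MetricSpace X] (f : X → X) (n : ℕ) (ε : ℝ) (E : Set X) : Prop :=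
  ∀ x ∈ E, ∀ y ∈ E, x ≠ y → ∃ k < n, ε < dist (f^[k] x) (f^[k] y)

/-- `s(n,ε)`: the maximal cardinality of an `(n,ε)`-separated subset of `X`. -/
noncomputable def sepNum [MetricSpace X] (f : X → X) (n : ℕ) (ε : ℝ) : ℕ :=
  sSup {N : ℕ | ∃ E : Finset X, IsSepSet f n ε ↑E ∧ E.card = N}

/-- Topological entropy `h(f) = lim_{ε → 0⁺} limsup_n (ln s(n,ε))/n`; since the inner
quantity is monotone as `ε` decreases, the limit equals the supremum over `ε > 0`. -/
noncomputable def topEnt [MetricSpace X] (f : X → X) : EReal :=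
  ⨆ (ε : ℝ) (_ : 0 < ε),
    Filter.limsup (fun n : ℕ => ((Real.log (sepNum f n ε) / n : ℝ) : EReal)) Filter.atTop

/-- The set of periodic points of period at most `n`. -/
def perPts (f : X → X) (n : ℕ) : Set X :=
  {x | ∃ m : ℕ, 0 < m ∧ m ≤ n ∧ f^[m] x = x}

open Classical in
/-- `p(f) = limsup_n (ln p_n(f))/n`, the exponential growth rate of periodic points
(`⊤` contributions when there are infinitely many such points). -/
noncomputable def perGrowth (f : X → X) : EReal :=
  Filter.limsup (fun n : ℕ =>
      if h : (perPts f n).Finite then ((Real.log (perPts f n).ncard / n : ℝ) : EReal) else ⊤)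
    Filter.atTop

/-- The lower box dimension of `X`, `liminf_{ε→0⁺} ln s(1,ε) / (-ln ε)`. -/
noncomputable def lowerBoxDim [MetricSpace X] (f : X → X) : EReal :=
  Filter.liminf (fun ε : ℝ => ((Real.log (sepNum f 1 ε) / (-Real.log ε) : ℝ) : EReal))
    (nhdsWithin 0 (Set.Ioi 0))



































/-! Semiflow case -/

/-- `φ` is a continuous semiflow on `X` (for nonnegative times). -/
def IsSemiflow [TopologicalSpace X] (φ : ℝ → X → X) : Prop :=
  (∀ x : X, φ 0 x = x) ∧
    (∀ s t : ℝ, 0 ≤ s → 0 ≤ t → ∀ x : X, φ (s + t) x = φ s (φ t x)) ∧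
      Continuous fun p : ℝ × X => φ p.1 p.2

/-- Minimality of a semiflow: every forward orbit is dense. -/
def MinimalFlow [TopologicalSpace X] (φ : ℝ → X → X) : Prop :=
  ∀ x : X, Dense {y : X | ∃ t : ℝ, 0 ≤ t ∧ φ t x = y}

/-- Transition times for the semiflow gluing: `s 0 = 0`, `s (j+1) = s j + m_j + t_j`. -/
def sFlow (C : ℕ → X × ℝ) (g : ℕ → ℝ) : ℕ → ℝ
  | 0 => 0
  | j + 1 => sFlow C g j + (C j).2 + g j

/-- Gluing orbit property for a semiflow. -/
def GluingFlow [MetricSpace X] (φ : ℝ → X → X) : Prop :=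
  ∀ ε : ℝ, 0 < ε → ∃ M : ℝ, 0 < M ∧
    ∀ k : ℕ, 0 < k → ∀ C : ℕ → X × ℝ, (∀ j < k, 0 ≤ (C j).2) →
      ∃ g : ℕ → ℝ, (∀ j < k - 1, 0 ≤ g j ∧ g j ≤ M) ∧
        ∃ z : X, ∀ j < k, ∀ t ∈ Set.Icc (0 : ℝ) (C j).2,
          dist (φ (sFlow C g j + t) z) (φ t (C j).1) < ε

/-- `E` is a `(T,ε)`-separated set for the semiflow `φ`. -/
def IsSepFlow [MetricSpace X] (φ : ℝ → X → X) (T ε : ℝ) (E : Set X) : Prop :=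
  ∀ x ∈ E, ∀ y ∈ E, x ≠ y → ∃ t ∈ Set.Icc (0 : ℝ) T, ε < dist (φ t x) (φ t y)

/-- `s(T,ε)` for the semiflow. -/
noncomputable def sepFlow [MetricSpace X] (φ : ℝ → X → X) (T ε : ℝ) : ℕ :=
  sSup {N : ℕ | ∃ E : Finset X, IsSepFlow φ T ε ↑E ∧ E.card = N}

/-- Topological entropy of a semiflow. -/
noncomputable def topEntFlow [MetricSpace X] (φ : ℝ → X → X) : EReal :=
  ⨆ (ε : ℝ) (_ : 0 < ε),
    Filter.limsup (fun T : ℝ => ((Real.log (sepFlow φ T ε) / T : ℝ) : EReal)) Filter.atTop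

section Aux
variable [TopologicalSpace X] (f : X ≃ₜ X)

lemma zIter_eq_pow (n : ℤ) (x : X) : zIter f n x = ((f.toEquiv : Equiv.Perm X) ^ n) x := by
  rcases le_or_gt 0 n with h | h
  · rw [zIter, if_pos h]
    lift n to ℕ using h
    rw [zpow_natCast, Equiv.Perm.coe_pow, Int.toNat_natCast]
    rfl
  · rw [zIter, if_neg (not_le.mpr h)]
    obtain ⟨m, rfl⟩ : ∃ m : ℕ, n = -(m : ℤ) := ⟨n.natAbs, by omega⟩
    rw [zpow_neg, zpow_natCast, neg_neg, Int.toNat_natCast]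
    show _ = ((f.toEquiv ^ m)⁻¹ : Equiv.Perm X) x
    rw [← inv_pow, Equiv.Perm.coe_pow]
    rfl

lemma zIter_add (a b : ℤ) (x : X) : zIter f (a + b) x = zIter f a (zIter f b x) := by
  simp only [zIter_eq_pow, zpow_add, Equiv.Perm.mul_apply]

lemma zIter_coe (n : ℕ) (x : X) : zIter f (n : ℤ) x = (⇑f)^[n] x := by
  rw [zIter, if_pos (Int.natCast_nonneg n), Int.toNat_natCast]

lemma zIter_neg_coe (n : ℕ) (x : X) : zIter f (-(n : ℤ)) x = (⇑f.symm)^[n] x := by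
  rcases Nat.eq_zero_or_pos n with rfl | h
  · simp [zIter]
  · rw [zIter, if_neg (by omega), neg_neg, Int.toNat_natCast]

lemma zIter_zero (x : X) : zIter f 0 x = x := rfl

lemma continuous_zIter (n : ℤ) : Continuous (zIter f n) := by
  unfold zIter
  rcases le_or_gt 0 n with h | h
  · simp only [if_pos h]; exact f.continuous.iterate n.toNat
  · simp only [if_neg (not_le.mpr h)]; exact f.symm.continuous.iterate (-n).toNat

lemma symm_iterate_iterate (b s : ℕ) (h : b ≤ s) (t : X) :
    (⇑f.symm)^[b] ((⇑f)^[s] t) = (⇑f)^[s - b] t := by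
  have : (⇑f)^[s] t = (⇑f)^[b] ((⇑f)^[s - b] t) := by
    rw [← Function.iterate_add_apply]
    congr 1; omega
  rw [this]
  exact (Function.LeftInverse.iterate f.symm_apply_apply b) _

end Aux

theorem stmt8 [MetricSpace X] [CompactSpace X] (f : X ≃ₜ X)
    (hnm : ¬ Minimal f) (hgo : GluingOrbit (⇑f)) :
    ∃ z : X, ∃ ε₀ : ℝ, 0 < ε₀ ∧ ∀ n : ℤ, n ≠ 0 → ε₀ ≤ dist (zIter f n z) z := by
  rw [Minimal] at hnm
  push_neg at hnm
  obtain ⟨x, hx⟩ := hnm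
  set K := closure (Set.range fun n : ℤ => zIter f n x) with hK
  have hKc : IsClosed K := isClosed_closure
  have hKne : K.Nonempty := ⟨x, subset_closure ⟨0, rfl⟩⟩
  obtain ⟨y, hy⟩ : ∃ y, y ∉ K := by
    by_contra h
    push_neg at h
    exact hx fun z => h z
  have hd : 0 < infDist y K := (hKc.notMem_iff_infDist_pos hKne).1 hy
  set ε := infDist y K / 8 with hεdef
  have hε0 : 0 < ε := by positivity
  obtain ⟨M, hM, hprop⟩ := hgo ε hε0
  -- the approximating points
  have key : ∀ n : ℕ, ∃ w : X, dist w y < ε ∧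
      ∀ b : ℤ, M ≤ b.natAbs → b.natAbs ≤ n + M + 1 → infDist (zIter f b w) K < ε := by
    intro n
    set N := n + M + 1 with hN
    set C : ℕ → X × ℕ := fun j =>
      if j = 0 then ((⇑f.symm)^[N] x, N) else if j = 1 then (y, 1) else (x, N) with hC
    obtain ⟨g, hg, z, hz⟩ := hprop 3 (by norm_num) C (by
      intro j hj
      simp only [hC]
      split_ifs <;> simp <;> omega)
    have hg0 : 0 < g 0 ∧ g 0 ≤ M := hg 0 (by norm_num)
    have hg1 : 0 < g 1 ∧ g 1 ≤ M := hg 1 (by norm_num)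
    have hC0 : C 0 = ((⇑f.symm)^[N] x, N) := by simp [hC]
    have hC1 : C 1 = (y, 1) := by simp [hC]
    have hC2 : C 2 = (x, N) := by simp [hC]
    have e0 : sTimes C g 0 = 0 := rfl
    have e1 : sTimes C g 1 = N + g 0 - 1 := by
      show sTimes C g 0 + (C 0).2 + g 0 - 1 = _
      rw [e0, hC0]
      simp
    have e2 : sTimes C g 2 = (N + g 0 - 1) + g 1 := by
      show sTimes C g 1 + (C 1).2 + g 1 - 1 = _
      rw [e1, hC1]
      omega
    set s1 := N + g 0 - 1 with hs1
    refine ⟨(⇑f)^[s1] z, ?_, ?_⟩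
    · have ha := hz 1 (by norm_num) 0 (by rw [hC1]; norm_num)
      rw [e1, hC1, Nat.add_zero] at ha
      simpa using ha
    · intro b hb1 hb2
      rcases Int.natAbs_eq b with h | h
      · -- forward
        set c := b.natAbs with hc
        have hl : c - g 1 < N := by omega
        have hsh := hz 2 (by norm_num) (c - g 1) (by rw [hC2]; exact hl)
        rw [hC2] at hsh
        have hidx : sTimes C g 2 + (c - g 1) = s1 + c := by rw [e2]; omega
        rw [hidx] at hsh
        have hw : zIter f b ((⇑f)^[s1] z) = (⇑f)^[s1 + c] z := by
          rw [h, zIter_coe, ← Function.iterate_add_apply, Nat.add_comm]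
        rw [hw]
        have hmem : (⇑f)^[c - g 1] x ∈ K := by
          refine subset_closure ⟨((c - g 1 : ℕ) : ℤ), ?_⟩
          exact zIter_coe f (c - g 1) x
        exact lt_of_le_of_lt (infDist_le_dist_of_mem hmem) hsh
      · -- backward
        set c := b.natAbs with hc
        have hcs1 : c ≤ s1 := by omega
        have hw : zIter f b ((⇑f)^[s1] z) = (⇑f)^[s1 - c] z := by
          rw [h, zIter_neg_coe, symm_iterate_iterate f c s1 hcs1]
        have hl : s1 - c < N := by omega
        have hsh := hz 0 (by norm_num) (s1 - c) (by rw [hC0]; exact hl)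
        rw [hC0, e0, Nat.zero_add] at hsh
        rw [hw]
        have hmem : (⇑f)^[s1 - c] ((⇑f.symm)^[N] x) ∈ K := by
          refine subset_closure ⟨((s1 - c : ℕ) : ℤ) + (-(N : ℤ)), ?_⟩
          show zIter f (((s1 - c : ℕ) : ℤ) + (-(N : ℤ))) x = _
          rw [zIter_add, zIter_coe, zIter_neg_coe]
        exact lt_of_le_of_lt (infDist_le_dist_of_mem hmem) hsh
  choose w hw1 hw2 using key
  obtain ⟨a, φ, hφ, hconv⟩ := CompactSpace.tendsto_subseq w
  -- limit properties
  have ha1 : dist a y ≤ ε := by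
    have ht : Tendsto (fun i => dist (w (φ i)) y) atTop (nhds (dist a y)) :=
      (hconv.dist tendsto_const_nhds)
    exact le_of_tendsto ht (Eventually.of_forall fun i => (hw1 (φ i)).le)
  have ha2 : ∀ b : ℤ, M ≤ b.natAbs → infDist (zIter f b a) K ≤ ε := by
    intro b hb
    have hcont : Continuous fun p : X => infDist (zIter f b p) K :=
      (continuous_infDist_pt K).comp (continuous_zIter f b)
    have ht : Tendsto (fun i => infDist (zIter f b (w (φ i))) K) atTop
        (nhds (infDist (zIter f b a) K)) := (hcont.tendsto a).comp hconv
    refine le_of_tendsto ht ?_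
    filter_upwards [eventually_ge_atTop b.natAbs] with i hi
    have h3 : i ≤ φ i := hφ.le_apply
    exact (hw2 (φ i) b hb (by omega)).le
  -- a is far from K
  have haK : 7 * ε ≤ infDist a K := by
    have h1 : infDist y K ≤ infDist a K + dist y a := infDist_le_infDist_add_dist
    have h2 : dist y a ≤ ε := by rw [dist_comm]; exact ha1
    have : infDist y K = 8 * ε := by rw [hεdef]; ring
    linarith
  -- far returns for |b| ≥ M
  have hfar : ∀ b : ℤ, M ≤ b.natAbs → 6 * ε ≤ dist (zIter f b a) a := by
    intro b hb
    have h1 : infDist a K ≤ infDist (zIter f b a) K + dist a (zIter f b a) :=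
      infDist_le_infDist_add_dist
    have h2 := ha2 b hb
    rw [dist_comm] at h1
    linarith
  -- a is not periodic
  have hnp : ∀ b : ℤ, b ≠ 0 → zIter f b a ≠ a := by
    intro b hb hper
    have hk : ∀ k : ℕ, zIter f (k * b) a = a := by
      intro k
      induction k with
      | zero => simp [zIter_zero]
      | succ k ih =>
        have hrw : ((k + 1 : ℕ) : ℤ) * b = b + (k : ℤ) * b := by push_cast; ring
        rw [hrw, zIter_add, ih, hper]
    have hMb : M ≤ ((M : ℤ) * b).natAbs := by
      have : b.natAbs ≥ 1 := by omega
      rw [Int.natAbs_mul, Int.natAbs_natCast]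
      nlinarith
    have := hfar ((M : ℤ) * b) hMb
    rw [hk M] at this
    simp at this
    linarith
  -- assemble ε₀
  set S : Finset ℤ := (Finset.Ioo (-(M : ℤ)) (M : ℤ)).erase 0 with hS
  set T : Finset ℝ := insert ε (S.image fun b => dist (zIter f b a) a) with hT
  have hTne : T.Nonempty := ⟨ε, Finset.mem_insert_self _ _⟩
  have hTpos : ∀ r ∈ T, 0 < r := by
    intro r hr
    rcases Finset.mem_insert.1 hr with rfl | hr
    · exact hε0
    · obtain ⟨b, hb, rfl⟩ := Finset.mem_image.1 hr
      have hb0 : b ≠ 0 := (Finset.mem_erase.1 hb).1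
      exact dist_pos.mpr (hnp b hb0)
  refine ⟨a, T.min' hTne, hTpos _ (T.min'_mem hTne), ?_⟩
  intro n hn
  by_cases hcase : M ≤ n.natAbs
  · have h6 : 6 * ε ≤ dist (zIter f n a) a := hfar n hcase
    have hle : T.min' hTne ≤ ε := Finset.min'_le _ _ (Finset.mem_insert_self _ _)
    linarith
  · refine Finset.min'_le _ _ ?_
    refine Finset.mem_insert_of_mem (Finset.mem_image.2 ⟨n, ?_, rfl⟩)
    rw [hS]
    refine Finset.mem_erase.2 ⟨hn, Finset.mem_Ioo.2 ⟨?_, ?_⟩⟩ <;> omega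


end Paper
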